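/- Let z^{[1]}, ..., z^{[N]} ∈ ℝ^q with N ≥ 1, let ẑ = (1/N)·Σ_i z^{[i]}, m = (1/N)·Σ_i ‖z^{[i]}‖², sample covariance matrix Σ̂ = (1/N)·Σ_i (z^{[i]} − ẑ)(z^{[i]} − ẑ)ᵀ, sample covariance vector ĉ = (1/N)·Σ_i (z^{[i]} − ẑ)·(‖z^{[i]}‖² − m), and sample variance v̂ = (1/N)·Σ_i (‖z^{[i]}‖² − m)². Then for every z ∈ ℝ^q, writing μ(z) = (1/N)·Σ_i ‖z + z^{[i]}‖², one has (1/N)·Σ_{i=1}^{N} (‖z + z^{[i]}‖² − μ(z))² = 4·zᵀ·Σ̂·z + 4·⟨ĉ, z⟩ + v̂ = (z,1)ᵀ·[[4Σ̂, 2ĉ],[2ĉᵀ, v̂]]·(z,1). -/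

import Mathlib

open Matrix BigOperators

/-- **Quadratic-form representation of the sample variance of squared norms.**
Let `z⁽¹⁾, …, z⁽ᴺ⁾ ∈ ℝ^q` with `N ≥ 1`, `ẑ` their sample mean, `m` the sample
mean of their squared Euclidean norms, `Σ̂` the sample covariance matrix,
`ĉ` the sample covariance vector between `z` and `‖z‖²`, and `v̂` the sample
variance of `‖z‖²`.  Then for every `z ∈ ℝ^q`, writing
`μ(z) = (1/N) ∑ᵢ ‖z + z⁽ⁱ⁾‖²`,
`(1/N) ∑ᵢ (‖z + z⁽ⁱ⁾‖² − μ(z))² = 4 zᵀ Σ̂ z + 4 ⟨ĉ, z⟩ + v̂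
  = (z,1)ᵀ [[4Σ̂, 2ĉ],[2ĉᵀ, v̂]] (z,1)`. -/
theorem variance_norm_sq_quadratic_form
    (q N : ℕ) (hN : 1 ≤ N)
    (zs : Fin N → EuclideanSpace ℝ (Fin q))
    (zhat : EuclideanSpace ℝ (Fin q))
    (hzhat : zhat = (1 / (N : ℝ)) • ∑ i, zs i)
    (m : ℝ) (hm : m = (1 / (N : ℝ)) * ∑ i, ‖zs i‖ ^ 2)
    (Sighat : Matrix (Fin q) (Fin q) ℝ)
    (hSighat : Sighat = Matrix.of fun j k =>
      (1 / (N : ℝ)) * ∑ i, (zs i j - zhat j) * (zs i k - zhat k))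
    (chat : Fin q → ℝ)
    (hchat : chat = fun j =>
      (1 / (N : ℝ)) * ∑ i, (zs i j - zhat j) * (‖zs i‖ ^ 2 - m))
    (vhat : ℝ)
    (hvhat : vhat = (1 / (N : ℝ)) * ∑ i, (‖zs i‖ ^ 2 - m) ^ 2)
    (μ : EuclideanSpace ℝ (Fin q) → ℝ)
    (hμ : ∀ z, μ z = (1 / (N : ℝ)) * ∑ i, ‖z + zs i‖ ^ 2)
    (M : Matrix (Fin q ⊕ Unit) (Fin q ⊕ Unit) ℝ)
    (hM : M = Matrix.fromBlocks
      (4 • Sighat)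
      (Matrix.of fun j (_ : Unit) => 2 * chat j)
      (Matrix.of fun (_ : Unit) j => 2 * chat j)
      (Matrix.of fun (_ : Unit) (_ : Unit) => vhat)) :
    ∀ z : EuclideanSpace ℝ (Fin q),
      ((1 / (N : ℝ)) * ∑ i, (‖z + zs i‖ ^ 2 - μ z) ^ 2 =
          4 * ((fun j => z j) ⬝ᵥ Sighat.mulVec fun j => z j) +
            4 * (chat ⬝ᵥ fun j => z j) + vhat) ∧
        (1 / (N : ℝ)) * ∑ i, (‖z + zs i‖ ^ 2 - μ z) ^ 2 =
          (Sum.elim (fun j => z j) (fun _ : Unit => (1 : ℝ))) ⬝ᵥ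
            M.mulVec (Sum.elim (fun j => z j) (fun _ : Unit => (1 : ℝ))) := by
  intro z
  have hN0 : (N : ℝ) ≠ 0 := by positivity
  set A : Fin N → ℝ := fun i => ∑ j, z j * (zs i j - zhat j) with hA
  set B : Fin N → ℝ := fun i => ‖zs i‖ ^ 2 - m with hB
  have hinner : ∀ i, (inner ℝ z (zs i) : ℝ) = ∑ j, z j * zs i j := by
    intro i
    simp [PiLp.inner_apply, RCLike.inner_apply, mul_comm]
  have hz : ∀ j, zhat j = (1 / (N : ℝ)) * ∑ i, zs i j := by
    intro j
    rw [hzhat]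
    have : (∑ i, zs i) j = ∑ i, zs i j := by
      rw [WithLp.ofLp_sum]; exact Finset.sum_apply j Finset.univ fun i => (zs i).ofLp
    simp [this]
  have hsum : ∑ j, z j * zhat j = (1 / (N : ℝ)) * ∑ i, ∑ j, z j * zs i j := by
    simp only [hz, Finset.mul_sum]
    rw [Finset.sum_comm]
    exact Finset.sum_congr rfl fun i _ => Finset.sum_congr rfl fun j _ => by ring
  have hexp : ∀ i : Fin N, ‖z + zs i‖ ^ 2
      = ‖z‖ ^ 2 + 2 * (∑ j, z j * zs i j) + ‖zs i‖ ^ 2 := by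
    intro i
    rw [← hinner i, @norm_add_sq_real]
  have hμz : μ z = ‖z‖ ^ 2 + 2 * ∑ j, z j * zhat j + m := by
    rw [hμ]
    simp only [hexp]
    rw [Finset.sum_add_distrib, Finset.sum_add_distrib, Finset.sum_const,
      Finset.card_univ, Fintype.card_fin, ← Finset.mul_sum, hsum, hm, nsmul_eq_mul]
    field_simp
  have hdev : ∀ i, ‖z + zs i‖ ^ 2 - μ z = 2 * A i + B i := by
    intro i
    rw [hexp i, hμz]
    simp only [hA, hB, mul_sub, Finset.sum_sub_distrib]
    ring
  have hLHS : (1 / (N : ℝ)) * ∑ i, (‖z + zs i‖ ^ 2 - μ z) ^ 2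
      = 4 * ((1 / (N : ℝ)) * ∑ i, A i ^ 2)
        + 4 * ((1 / (N : ℝ)) * ∑ i, A i * B i)
        + (1 / (N : ℝ)) * ∑ i, B i ^ 2 := by
    have : ∀ i, (‖z + zs i‖ ^ 2 - μ z) ^ 2
        = 4 * A i ^ 2 + 4 * (A i * B i) + B i ^ 2 := by
      intro i; rw [hdev i]; ring
    simp only [this]
    rw [Finset.sum_add_distrib, Finset.sum_add_distrib, ← Finset.mul_sum, ← Finset.mul_sum]
    ring
  -- quadratic term
  have hQ : ((fun j => z j) ⬝ᵥ Sighat.mulVec fun j => z j)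
      = (1 / (N : ℝ)) * ∑ i, A i ^ 2 := by
    have lhs_eq : ((fun j => z j) ⬝ᵥ Sighat.mulVec fun j => z j)
        = ∑ j, ∑ k, ∑ i, (1 / (N : ℝ)) *
            (z j * (zs i j - zhat j) * (z k * (zs i k - zhat k))) := by
      simp only [dotProduct, Matrix.mulVec, hSighat, Matrix.of_apply,
        Finset.mul_sum, Finset.sum_mul]
      exact Finset.sum_congr rfl fun j _ => Finset.sum_congr rfl fun k _ =>
        Finset.sum_congr rfl fun i _ => by ring
    have rhs_eq : (1 / (N : ℝ)) * ∑ i, A i ^ 2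
        = ∑ i, ∑ j, ∑ k, (1 / (N : ℝ)) *
            (z j * (zs i j - zhat j) * (z k * (zs i k - zhat k))) := by
      rw [Finset.mul_sum]
      refine Finset.sum_congr rfl fun i _ => ?_
      simp only [hA]
      rw [sq, Finset.sum_mul_sum]
      simp only [Finset.mul_sum]
    rw [lhs_eq, rhs_eq]
    exact (Finset.sum_congr rfl fun j _ => Finset.sum_comm).trans Finset.sum_comm
  -- linear term
  have hC : (chat ⬝ᵥ fun j => z j) = (1 / (N : ℝ)) * ∑ i, A i * B i := by
    have lhs_eq : (chat ⬝ᵥ fun j => z j)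
        = ∑ j, ∑ i, (1 / (N : ℝ)) * (z j * (zs i j - zhat j) * B i) := by
      simp only [dotProduct, hchat, hB, Finset.sum_mul, Finset.mul_sum]
      exact Finset.sum_congr rfl fun j _ => Finset.sum_congr rfl fun i _ => by ring
    have rhs_eq : (1 / (N : ℝ)) * ∑ i, A i * B i
        = ∑ i, ∑ j, (1 / (N : ℝ)) * (z j * (zs i j - zhat j) * B i) := by
      rw [Finset.mul_sum]
      refine Finset.sum_congr rfl fun i _ => ?_
      simp only [hA, Finset.sum_mul, Finset.mul_sum]
    rw [lhs_eq, rhs_eq]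
    exact Finset.sum_comm
  have hV : vhat = (1 / (N : ℝ)) * ∑ i, B i ^ 2 := by rw [hvhat]
  have h1 : (1 / (N : ℝ)) * ∑ i, (‖z + zs i‖ ^ 2 - μ z) ^ 2 =
      4 * ((fun j => z j) ⬝ᵥ Sighat.mulVec fun j => z j) +
        4 * (chat ⬝ᵥ fun j => z j) + vhat := by
    rw [hLHS, hQ, hC, hV]
  refine ⟨h1, ?_⟩
  rw [h1, hM]
  rw [Matrix.fromBlocks_mulVec, sumElim_dotProduct_sumElim]
  simp only [Matrix.mulVec, dotProduct, Matrix.of_apply, Matrix.smul_apply,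
    Fintype.sum_unique, Pi.add_apply, Function.comp, Sum.elim_inl, Sum.elim_inr,
    mul_one, one_mul, mul_add, Finset.sum_add_distrib]
  simp only [nsmul_eq_mul, Nat.cast_ofNat, Finset.mul_sum]
  have d1 : ∑ x : Fin q, ∑ i : Fin q, 4 * (z x * (Sighat x i * z i))
      = ∑ x : Fin q, ∑ i : Fin q, z x * (4 * Sighat x i * z i) :=
    Finset.sum_congr rfl fun x _ => Finset.sum_congr rfl fun i _ => by ring
  have d2 : ∑ x : Fin q, 4 * (chat x * z x)
      = ∑ x : Fin q, z x * (2 * chat x) + ∑ x : Fin q, 2 * chat x * z x := by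
    rw [← Finset.sum_add_distrib]
    exact Finset.sum_congr rfl fun x _ => by ring
  rw [d1, d2]
  ring
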